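/- Let n ≥ 3, ε > 0 and v_ε(x) = ε^((n-2)/2) · ((ε + xₙ)² + Σ_{a=1}^{n-1} x_a²)^(-(n-2)/2). Then ∫_{ℝⁿ₊} |∇v_ε(x)|² dx = (n−2) · ∫_{∂ℝⁿ₊} v_ε(y)^(2(n-1)/(n-2)) dσ(y), where dσ is the (n−1)-dimensional Lebesgue measure on the boundary {xₙ = 0}. -/

import Mathlib

open scoped BigOperators
open MeasureTheory

noncomputable section

abbrev E (n : ℕ) := EuclideanSpace ℝ (Fin n)

/-- Partial derivative in the `i`-th coordinate direction. -/
def pder {n : ℕ} (i : Fin n) (f : E n → ℝ) (x : E n) : ℝ :=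
  fderiv ℝ f x (EuclideanSpace.single i 1)

/-- Euclidean Laplacian. -/
def lap {n : ℕ} (f : E n → ℝ) (x : E n) : ℝ :=
  ∑ i, pder i (pder i f) x

/-- The index of the last ("normal") coordinate `x_n`. -/
def nIdx (n : ℕ) (hn : 0 < n) : Fin n := ⟨n - 1, Nat.sub_lt hn one_pos⟩

/-- The model function `v_ε` on the upper half-space. -/
def vE (n : ℕ) (hn : 0 < n) (ε : ℝ) (x : E n) : ℝ :=
  ε ^ (((n : ℝ) - 2) / 2) *
    ((ε + x (nIdx n hn)) ^ 2 + ∑ a ∈ Finset.univ.erase (nIdx n hn), x a ^ 2) ^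
      (-(((n : ℝ) - 2) / 2))

/-- Extension of a point of `ℝ^{n-1}` to the boundary hyperplane of `ℝⁿ`. -/
def emb (n : ℕ) (y : E (n - 1)) : E n :=
  WithLp.toLp 2 (fun i : Fin n => if h : (i : ℕ) < n - 1 then y ⟨i, h⟩ else 0)

open scoped ENNReal

private lemma measurable_rpow_const (c : ℝ) : Measurable fun x : ℝ => x ^ c :=
  measurable_of_continuousOn_compl_singleton 0 fun x hx =>
    (Real.continuousAt_rpow_const x c (Or.inl hx)).continuousWithinAt

private lemma sum_erase_last {m : ℕ} (g : Fin (m+3) → ℝ) :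
    ∑ a ∈ Finset.univ.erase (Fin.last (m+2)), g a = ∑ b : Fin (m+2), g b.castSucc := by
  have h1 := Fin.sum_univ_succAbove g (Fin.last (m+2))
  have h2 := Finset.add_sum_erase Finset.univ g (Finset.mem_univ (Fin.last (m+2)))
  simp only [Fin.succAbove_last] at h1
  linarith

private lemma norm_sq_sum {ι : Type*} [Fintype ι] (v : EuclideanSpace ℝ ι) :
    ‖v‖ ^ 2 = ∑ i, v i ^ 2 := by
  rw [EuclideanSpace.norm_eq, Real.sq_sqrt (by positivity)]
  simp [sq_abs]

private lemma norm_sq_eq {m : ℕ} (ε : ℝ) (x : E (m+3)) :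
    (ε + x (Fin.last (m+2))) ^ 2 + ∑ a ∈ Finset.univ.erase (Fin.last (m+2)), x a ^ 2
      = ‖x + EuclideanSpace.single (Fin.last (m+2)) ε‖ ^ 2 := by
  rw [norm_sq_sum, ← Finset.add_sum_erase _ _ (Finset.mem_univ (Fin.last (m+2)))]
  congr 1
  · simp only [PiLp.add_apply, EuclideanSpace.single_apply, if_pos rfl, eq_self_iff_true,
      if_true]
    ring
  · refine Finset.sum_congr rfl fun a ha => ?_
    have hne : a ≠ Fin.last (m+2) := Finset.ne_of_mem_erase ha
    simp [PiLp.add_apply, EuclideanSpace.single_apply, hne]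

private lemma grad_eq {m : ℕ} {ε : ℝ} (hε : 0 < ε) (x : E (m+3))
    (hx : 0 ≤ x (Fin.last (m+2))) :
    ∑ i, pder i (vE (m+3) (by omega) ε) x ^ 2
      = (((m:ℝ)+1)^2 * ε ^ ((m:ℝ)+1)) *
        ((ε + x (Fin.last (m+2))) ^ 2 + ∑ a ∈ Finset.univ.erase (Fin.last (m+2)), x a ^ 2)
          ^ (-((m:ℝ)+2)) := by
  set ν : Fin (m+3) := Fin.last (m+2) with hνdef
  set c : E (m+3) := EuclideanSpace.single ν ε with hcdef
  set p0 : ℝ := ((m:ℝ)+1)/2 with hp0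
  have hq : (((m+3:ℕ):ℝ) - 2)/2 = p0 := by rw [hp0]; push_cast; ring
  have hBpos : (0:ℝ) < (ε + x ν) ^ 2 + ∑ a ∈ Finset.univ.erase ν, x a ^ 2 := by
    have h1 : (0:ℝ) < (ε + x ν) ^ 2 := by positivity
    exact add_pos_of_pos_of_nonneg h1 (Finset.sum_nonneg fun _ _ => sq_nonneg _)
  have hBnorm := norm_sq_eq ε x
  have hNpos : (0:ℝ) < ‖x + c‖ ^ 2 := by rw [← hBnorm]; exact hBpos
  have hne : ‖x + c‖ ^ 2 ≠ 0 := hNpos.ne'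
  have hfun : vE (m+3) (by omega) ε
      = fun y : E (m+3) => ε ^ p0 * (‖y + c‖ ^ 2) ^ (-p0) := by
    funext y
    show ε ^ ((((m+3:ℕ):ℝ) - 2)/2) *
        ((ε + y ν) ^ 2 + ∑ a ∈ Finset.univ.erase ν, y a ^ 2) ^ (-((((m+3:ℕ):ℝ) - 2)/2))
      = ε ^ p0 * (‖y + c‖ ^ 2) ^ (-p0)
    rw [hq, norm_sq_eq ε y]
  have h1 : HasFDerivAt (fun y : E (m+3) => y + c) (ContinuousLinearMap.id ℝ (E (m+3))) x :=
    (hasFDerivAt_id x).add_const c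
  have h2 := h1.norm_sq
  have h3' := h2.rpow_const (p := -p0) (Or.inl hne)
  have h4 := h3'.const_mul (ε ^ p0)
  have hpd : ∀ i, pder i (vE (m+3) (by omega) ε) x
      = ε ^ p0 * ((-p0 * (‖x + c‖ ^ 2) ^ (-p0 - 1)) * (2 * (x + c) i)) := by
    intro i
    rw [hfun]
    show fderiv ℝ _ x (EuclideanSpace.single i 1) = _
    rw [h4.fderiv]
    simp [ContinuousLinearMap.smul_apply, EuclideanSpace.inner_single_right,
      real_inner_comm, smul_eq_mul]
    ring
  have hsq : ∀ i, pder i (vE (m+3) (by omega) ε) x ^ 2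
      = ((2*p0)^2 * (ε ^ p0 * ε ^ p0) * ((‖x + c‖ ^ 2) ^ (-p0-1) * (‖x + c‖ ^ 2) ^ (-p0-1)))
        * ((x + c) i) ^ 2 := by
    intro i; rw [hpd i]; ring
  calc ∑ i, pder i (vE (m+3) (by omega) ε) x ^ 2
      = ((2*p0)^2 * (ε ^ p0 * ε ^ p0) * ((‖x + c‖ ^ 2) ^ (-p0-1) * (‖x + c‖ ^ 2) ^ (-p0-1)))
        * ∑ i, ((x + c) i) ^ 2 := by
        rw [Finset.mul_sum]; exact Finset.sum_congr rfl fun i _ => hsq i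
    _ = ((2*p0)^2) * (ε ^ p0 * ε ^ p0) *
        ((‖x + c‖ ^ 2) ^ (-p0-1) * (‖x + c‖ ^ 2) ^ (-p0-1) * (‖x + c‖ ^ 2)) := by
        rw [← norm_sq_sum]; ring
    _ = (((m:ℝ)+1)^2 * ε ^ ((m:ℝ)+1)) * (‖x + c‖ ^ 2) ^ (-((m:ℝ)+2)) := by
        have e1 : ε ^ p0 * ε ^ p0 = ε ^ ((m:ℝ)+1) := by
          rw [← Real.rpow_add hε]; congr 1; rw [hp0]; ring
        have e2 : (‖x + c‖ ^ 2) ^ (-p0-1) * (‖x + c‖ ^ 2) ^ (-p0-1) * (‖x + c‖ ^ 2)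
            = (‖x + c‖ ^ 2) ^ (-((m:ℝ)+2)) := by
          nth_rewrite 3 [← Real.rpow_one (‖x + c‖ ^ 2)]
          rw [← Real.rpow_add hNpos, ← Real.rpow_add hNpos]
          congr 1; rw [hp0]; ring
        have e3 : (2*p0)^2 = ((m:ℝ)+1)^2 := by rw [hp0]; ring
        rw [e1, e2, e3]
    _ = _ := by rw [hBnorm]

/-- The model integral over `ℝ^d`. -/
private def Kk (d : ℕ) (r s : ℝ) : ℝ≥0∞ :=
  ∫⁻ y : Fin d → ℝ, ENNReal.ofReal ((s ^ 2 + ∑ b, y b ^ 2) ^ r)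

private lemma base_cont {d : ℕ} (s : ℝ) :
    Continuous fun y : Fin d → ℝ => s ^ 2 + ∑ b, y b ^ 2 :=
  continuous_const.add (continuous_finset_sum _ fun b _ => (continuous_apply b).pow 2)

private lemma Kk_meas {d : ℕ} (r s : ℝ) :
    Measurable fun y : Fin d → ℝ => ENNReal.ofReal ((s ^ 2 + ∑ b, y b ^ 2) ^ r) :=
  (((measurable_rpow_const r).comp (base_cont s).measurable)).ennreal_ofReal

private lemma Kk_scale {d : ℕ} (r : ℝ) {s : ℝ} (hs : 0 < s) :
    Kk d r s = ENNReal.ofReal (s ^ ((d:ℝ) + 2*r)) * Kk d r 1 := by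
  have hs0 : s ≠ 0 := hs.ne'
  have hmap : Measure.map (s • · : (Fin d → ℝ) → Fin d → ℝ) volume
      = ENNReal.ofReal |(s ^ d)⁻¹| • volume := by
    rw [Measure.map_addHaar_smul (μ := (volume : Measure (Fin d → ℝ))) hs0]
    congr 2
    simp [Module.finrank_fintype_fun_eq_card]
  have hlm : ∫⁻ y : Fin d → ℝ, ENNReal.ofReal ((s ^ 2 + ∑ b, y b ^ 2) ^ r)
        ∂(Measure.map (s • ·) volume)
      = ∫⁻ z : Fin d → ℝ, ENNReal.ofReal ((s ^ 2 + ∑ b, (s • z) b ^ 2) ^ r) := by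
    exact lintegral_map (Kk_meas r s) (measurable_const_smul s)
  have hptw : ∀ z : Fin d → ℝ,
      ENNReal.ofReal ((s ^ 2 + ∑ b, (s • z) b ^ 2) ^ r)
        = ENNReal.ofReal ((s ^ 2) ^ r) * ENNReal.ofReal ((1 ^ 2 + ∑ b, z b ^ 2) ^ r) := by
    intro z
    have hb : s ^ 2 + ∑ b, (s • z) b ^ 2 = s ^ 2 * (1 ^ 2 + ∑ b, z b ^ 2) := by
      simp only [Pi.smul_apply, smul_eq_mul, mul_pow, one_pow]
      rw [← Finset.mul_sum]; ring
    rw [hb, Real.mul_rpow (sq_nonneg s) (by positivity), ENNReal.ofReal_mul (by positivity)]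
  have key : ENNReal.ofReal |(s ^ d)⁻¹| * Kk d r s
      = ENNReal.ofReal ((s ^ 2) ^ r) * Kk d r 1 := by
    have := hlm
    rw [hmap, lintegral_smul_measure, smul_eq_mul] at this
    unfold Kk
    rw [this]
    simp_rw [hptw]
    rw [lintegral_const_mul _ (Kk_meas r 1)]
  have ha0 : ENNReal.ofReal (s ^ d) ≠ 0 := by
    simp [ENNReal.ofReal_eq_zero, not_le, pow_pos hs]
  have hinv : ENNReal.ofReal |(s ^ d)⁻¹| = (ENNReal.ofReal (s ^ d))⁻¹ := by
    rw [abs_of_nonneg (by positivity), ENNReal.ofReal_inv_of_pos (pow_pos hs d)]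
  calc Kk d r s
      = (ENNReal.ofReal (s ^ d) * (ENNReal.ofReal (s ^ d))⁻¹) * Kk d r s := by
        rw [ENNReal.mul_inv_cancel ha0 ENNReal.ofReal_ne_top, one_mul]
    _ = ENNReal.ofReal (s ^ d) * ((ENNReal.ofReal (s ^ d))⁻¹ * Kk d r s) := by
        rw [mul_assoc]
    _ = ENNReal.ofReal (s ^ d) * (ENNReal.ofReal ((s ^ 2) ^ r) * Kk d r 1) := by
        rw [← hinv, key]
    _ = ENNReal.ofReal (s ^ ((d:ℝ) + 2*r)) * Kk d r 1 := by
        rw [← mul_assoc, ← ENNReal.ofReal_mul (by positivity)]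
        congr 2
        rw [← Real.rpow_natCast s d, ← Real.rpow_natCast s 2, ← Real.rpow_mul hs.le,
          ← Real.rpow_add hs]
        norm_num

private lemma oneD {m : ℕ} {ε : ℝ} (hε : 0 < ε) :
    ∫⁻ t in Set.Ici (0:ℝ), ENNReal.ofReal ((ε + t) ^ (-((m:ℝ)+2)))
      = ENNReal.ofReal (ε ^ (-((m:ℝ)+1)) / ((m:ℝ)+1)) := by
  have hm0 : (0:ℝ) ≤ (m:ℝ) := Nat.cast_nonneg m
  have ha : -((m:ℝ)+2) < -1 := by linarith
  rw [← restrict_Ioi_eq_restrict_Ici]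
  have mp := measurePreserving_add_left (volume : Measure ℝ) ε
  have hemb : MeasurableEmbedding (fun t : ℝ => ε + t) := by
    have := (MeasurableEquiv.addLeft ε).measurableEmbedding
    simpa [MeasurableEquiv.addLeft] using this
  have htr := mp.setLIntegral_comp_preimage_emb hemb
    (fun u => ENNReal.ofReal (u ^ (-((m:ℝ)+2)))) (Set.Ioi ε)
  have hpre : (fun t : ℝ => ε + t) ⁻¹' Set.Ioi ε = Set.Ioi 0 := by
    ext t; simp [Set.mem_Ioi]
  rw [hpre] at htr
  rw [htr]
  have hInt : IntegrableOn (fun u : ℝ => u ^ (-((m:ℝ)+2))) (Set.Ioi ε) :=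
    integrableOn_Ioi_rpow_of_lt ha hε
  have hnn : 0 ≤ᵐ[volume.restrict (Set.Ioi ε)] fun u : ℝ => u ^ (-((m:ℝ)+2)) := by
    filter_upwards [ae_restrict_mem measurableSet_Ioi] with u hu
    exact Real.rpow_nonneg (le_of_lt (hε.trans hu)) _
  rw [← ofReal_integral_eq_lintegral_ofReal hInt hnn,
    integral_Ioi_rpow_of_lt ha hε]
  congr 1
  have h1 : -((m:ℝ)+2) + 1 = -((m:ℝ)+1) := by ring
  rw [h1]
  rw [div_eq_div_iff (by linarith) (by linarith)]
  ring

private lemma boundary_eq {m : ℕ} {ε : ℝ} (hε : 0 < ε) (y : E (m+2)) :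
    vE (m+3) (by omega) ε (emb (m+3) y) ^ (2 * (((m+3:ℕ):ℝ) - 1) / (((m+3:ℕ):ℝ) - 2))
      = ε ^ ((m:ℝ)+2) * ((ε ^ 2 + ∑ b, y b ^ 2) ^ (-((m:ℝ)+2))) := by
  have hm1 : ((m:ℝ)+1) ≠ 0 := by positivity
  have hlast : emb (m+3) y (Fin.last (m+2)) = 0 := by
    simp only [emb, PiLp.toLp_apply]
    rw [dif_neg (by simp)]
  have hcast : ∀ b : Fin (m+2), emb (m+3) y b.castSucc = y b := by
    intro b
    simp only [emb, PiLp.toLp_apply]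
    rw [dif_pos (by simp)]
    exact congrArg y (Fin.ext (by simp))
  have hbase : (ε + emb (m+3) y (Fin.last (m+2))) ^ 2
      + ∑ a ∈ Finset.univ.erase (Fin.last (m+2)), emb (m+3) y a ^ 2
      = ε ^ 2 + ∑ b, y b ^ 2 := by
    rw [sum_erase_last (fun a => emb (m+3) y a ^ 2), hlast]
    simp only [hcast, add_zero]
  have hA : (0:ℝ) < ε ^ 2 + ∑ b, y b ^ 2 :=
    add_pos_of_pos_of_nonneg (by positivity) (Finset.sum_nonneg fun _ _ => sq_nonneg _)
  have hq1 : (((m+3:ℕ):ℝ) - 2) / 2 = ((m:ℝ)+1)/2 := by push_cast; ring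
  have hstep : vE (m+3) (by omega) ε (emb (m+3) y)
      = ε ^ (((m:ℝ)+1)/2) * (ε ^ 2 + ∑ b, y b ^ 2) ^ (-(((m:ℝ)+1)/2)) := by
    show ε ^ ((((m+3:ℕ):ℝ) - 2)/2) *
        ((ε + emb (m+3) y (Fin.last (m+2))) ^ 2
          + ∑ a ∈ Finset.univ.erase (Fin.last (m+2)), emb (m+3) y a ^ 2)
          ^ (-((((m+3:ℕ):ℝ) - 2)/2)) = _
    rw [hq1, hbase]
  rw [hstep]
  set Q : ℝ := 2 * (((m+3:ℕ):ℝ) - 1) / (((m+3:ℕ):ℝ) - 2) with hQ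
  have hQ' : Q = 2 * ((m:ℝ)+2) / ((m:ℝ)+1) := by rw [hQ]; push_cast; ring_nf
  have hprod : ((m:ℝ)+1)/2 * Q = (m:ℝ)+2 := by
    rw [hQ']; field_simp
  rw [Real.mul_rpow (Real.rpow_nonneg hε.le _) (Real.rpow_nonneg hA.le _),
    ← Real.rpow_mul hε.le, ← Real.rpow_mul hA.le, hprod]
  congr 1
  rw [neg_mul, hprod]

private theorem v_energy_aux (m : ℕ) (ε : ℝ) (hε : 0 < ε) :
    ∫ x in {x : E (m+3) | 0 ≤ x (Fin.last (m+2))},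
        (∑ i, pder i (vE (m+3) (by omega) ε) x ^ 2) =
      (((m+3:ℕ):ℝ) - 2) *
        ∫ y : E (m+2),
          vE (m+3) (by omega) ε (emb (m+3) y) ^
            (2 * (((m+3:ℕ):ℝ) - 1) / (((m+3:ℕ):ℝ) - 2)) := by
  have hm0 : (0:ℝ) ≤ (m:ℝ) := Nat.cast_nonneg m
  -- measurability of coordinate evaluations
  have heva : ∀ a : Fin (m+3), Measurable fun x : E (m+3) => x a := fun a =>
    (measurable_pi_apply a).comp ((MeasurableEquiv.toLp 2 (Fin (m+3) → ℝ)).symm).measurable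
  have hSm : MeasurableSet {x : E (m+3) | 0 ≤ x (Fin.last (m+2))} :=
    measurableSet_le measurable_const (heva _)
  have hbase_meas : Measurable fun x : E (m+3) =>
      (ε + x (Fin.last (m+2))) ^ 2 + ∑ a ∈ Finset.univ.erase (Fin.last (m+2)), x a ^ 2 :=
    (((heva _).const_add ε).pow_const 2).add
      (Finset.measurable_sum _ fun a _ => (heva a).pow_const 2)
  have hF_meas : Measurable fun x : E (m+3) =>
      ∑ i, pder i (vE (m+3) (by omega) ε) x ^ 2 :=
    Finset.measurable_sum _ fun i _ =>
      (measurable_fderiv_apply_const ℝ (vE (m+3) (by omega) ε)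
        (EuclideanSpace.single i 1)).pow_const 2
  -- LHS to lintegral
  rw [integral_eq_lintegral_of_nonneg_ae
    (ae_of_all _ fun x => Finset.sum_nonneg fun i _ => sq_nonneg _)
    hF_meas.aestronglyMeasurable.restrict]
  have hcong : ∫⁻ x in {x : E (m+3) | 0 ≤ x (Fin.last (m+2))},
        ENNReal.ofReal (∑ i, pder i (vE (m+3) (by omega) ε) x ^ 2)
      = ∫⁻ x in {x : E (m+3) | 0 ≤ x (Fin.last (m+2))},
          ENNReal.ofReal (((m:ℝ)+1)^2 * ε ^ ((m:ℝ)+1)) *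
            ENNReal.ofReal (((ε + x (Fin.last (m+2))) ^ 2
              + ∑ a ∈ Finset.univ.erase (Fin.last (m+2)), x a ^ 2) ^ (-((m:ℝ)+2))) := by
    refine setLIntegral_congr_fun hSm fun x hx => ?_
    rw [grad_eq hε x hx, ENNReal.ofReal_mul (by positivity)]
  have hM1 : Measurable fun x : E (m+3) =>
      ENNReal.ofReal (((ε + x (Fin.last (m+2))) ^ 2
        + ∑ a ∈ Finset.univ.erase (Fin.last (m+2)), x a ^ 2) ^ (-((m:ℝ)+2))) := by
    exact ((measurable_rpow_const _).comp hbase_meas).ennreal_ofReal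
  rw [hcong, lintegral_const_mul _ hM1]
  -- main halfspace integral
  have hL : ∫⁻ x in {x : E (m+3) | 0 ≤ x (Fin.last (m+2))},
      ENNReal.ofReal (((ε + x (Fin.last (m+2))) ^ 2
        + ∑ a ∈ Finset.univ.erase (Fin.last (m+2)), x a ^ 2) ^ (-((m:ℝ)+2)))
      = ENNReal.ofReal (ε ^ (-((m:ℝ)+1)) / ((m:ℝ)+1)) * Kk (m+2) (-((m:ℝ)+2)) 1 := by
    have mp1 := (EuclideanSpace.volume_preserving_symm_measurableEquiv_toLp (Fin (m+3))).symm
    have h5 := mp1.setLIntegral_comp_preimage_emb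
      (MeasurableEquiv.measurableEmbedding _)
      (fun x : E (m+3) =>
        ENNReal.ofReal (((ε + x (Fin.last (m+2))) ^ 2
          + ∑ a ∈ Finset.univ.erase (Fin.last (m+2)), x a ^ 2) ^ (-((m:ℝ)+2))))
      {x : E (m+3) | 0 ≤ x (Fin.last (m+2))}
    rw [← h5]
    have hsymm1 : ∀ (w : Fin (m+3) → ℝ) (a : Fin (m+3)),
        ((MeasurableEquiv.toLp 2 (Fin (m+3) → ℝ)).symm).symm w a = w a := fun _ _ => rfl
    have hpre1 : ((MeasurableEquiv.toLp 2 (Fin (m+3) → ℝ)).symm).symm ⁻¹'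
        {x : E (m+3) | 0 ≤ x (Fin.last (m+2))}
        = {w : Fin (m+3) → ℝ | 0 ≤ w (Fin.last (m+2))} := rfl
    rw [hpre1]
    simp only [hsymm1]
    -- split off the last coordinate
    have mp2 := (volume_preserving_piFinSuccAbove (fun _ : Fin (m+2+1) => ℝ)
      (Fin.last (m+2))).symm
    have h6 := mp2.setLIntegral_comp_preimage_emb (MeasurableEquiv.measurableEmbedding _)
      (fun w : Fin (m+3) → ℝ =>
        ENNReal.ofReal (((ε + w (Fin.last (m+2))) ^ 2
          + ∑ a ∈ Finset.univ.erase (Fin.last (m+2)), w a ^ 2) ^ (-((m:ℝ)+2))))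
      {w : Fin (m+3) → ℝ | 0 ≤ w (Fin.last (m+2))}
    rw [← h6]
    have hz1 : ∀ z : ℝ × (Fin (m+2) → ℝ),
        (MeasurableEquiv.piFinSuccAbove (fun _ : Fin (m+2+1) => ℝ) (Fin.last (m+2))).symm z
          (Fin.last (m+2)) = z.1 := by
      intro z
      simp [MeasurableEquiv.piFinSuccAbove_symm_apply, Fin.insertNthEquiv]
    have hz2 : ∀ (z : ℝ × (Fin (m+2) → ℝ)) (b : Fin (m+2)),
        (MeasurableEquiv.piFinSuccAbove (fun _ : Fin (m+2+1) => ℝ) (Fin.last (m+2))).symm z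
          b.castSucc = z.2 b := by
      intro z b
      have hsb : (b.castSucc : Fin (m+2+1)) = (Fin.last (m+2)).succAbove b := by
        rw [Fin.succAbove_last]
      rw [hsb]
      simp [MeasurableEquiv.piFinSuccAbove_symm_apply, Fin.insertNthEquiv]
    have hfz : ∀ z : ℝ × (Fin (m+2) → ℝ),
        ENNReal.ofReal (((ε +
            (MeasurableEquiv.piFinSuccAbove (fun _ : Fin (m+2+1) => ℝ)
              (Fin.last (m+2))).symm z (Fin.last (m+2))) ^ 2
          + ∑ a ∈ Finset.univ.erase (Fin.last (m+2)),
              (MeasurableEquiv.piFinSuccAbove (fun _ : Fin (m+2+1) => ℝ)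
                (Fin.last (m+2))).symm z a ^ 2) ^ (-((m:ℝ)+2)))
          = ENNReal.ofReal (((ε + z.1) ^ 2 + ∑ b, z.2 b ^ 2) ^ (-((m:ℝ)+2))) := by
      intro z
      rw [hz1, sum_erase_last (fun a =>
        (MeasurableEquiv.piFinSuccAbove (fun _ : Fin (m+2+1) => ℝ)
          (Fin.last (m+2))).symm z a ^ 2)]
      simp only [hz2]
    simp only [hfz]
    have hpre2 : (MeasurableEquiv.piFinSuccAbove (fun _ : Fin (m+2+1) => ℝ)
          (Fin.last (m+2))).symm ⁻¹'
        {w : Fin (m+3) → ℝ | 0 ≤ w (Fin.last (m+2))} = Set.Ici (0:ℝ) ×ˢ Set.univ := by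
      ext z
      simp only [Set.mem_preimage, Set.mem_setOf_eq, hz1 z, Set.mem_prod, Set.mem_Ici,
        Set.mem_univ, and_true]
    rw [hpre2, Measure.volume_eq_prod, ← Measure.prod_restrict, Measure.restrict_univ]
    have hbase2 : Measurable fun z : ℝ × (Fin (m+2) → ℝ) =>
        (ε + z.1) ^ 2 + ∑ b, z.2 b ^ 2 :=
      ((measurable_fst.const_add ε).pow_const 2).add
        (Finset.measurable_sum _ fun b _ => ((measurable_pi_apply b).comp measurable_snd).pow_const 2)
    have hM2 : Measurable fun z : ℝ × (Fin (m+2) → ℝ) =>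
        ENNReal.ofReal (((ε + z.1) ^ 2 + ∑ b, z.2 b ^ 2) ^ (-((m:ℝ)+2))) := by
      exact ((measurable_rpow_const _).comp hbase2).ennreal_ofReal
    rw [lintegral_prod _ hM2.aemeasurable]
    have hin : ∀ t ∈ Set.Ici (0:ℝ),
        ∫⁻ y : Fin (m+2) → ℝ, ENNReal.ofReal (((ε + t) ^ 2 + ∑ b, y b ^ 2) ^ (-((m:ℝ)+2)))
          = ENNReal.ofReal ((ε + t) ^ (-((m:ℝ)+2))) * Kk (m+2) (-((m:ℝ)+2)) 1 := by
      intro t ht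
      have hεt : 0 < ε + t := add_pos_of_pos_of_nonneg hε ht
      have hKk : ∫⁻ y : Fin (m+2) → ℝ,
          ENNReal.ofReal (((ε + t) ^ 2 + ∑ b, y b ^ 2) ^ (-((m:ℝ)+2)))
          = Kk (m+2) (-((m:ℝ)+2)) (ε + t) := rfl
      rw [hKk, Kk_scale _ hεt]
      congr 2
      push_cast
      ring
    have hM3 : Measurable fun t : ℝ => ENNReal.ofReal ((ε + t) ^ (-((m:ℝ)+2))) := by
      exact ((measurable_rpow_const _).comp (measurable_id.const_add ε)).ennreal_ofReal
    rw [setLIntegral_congr_fun measurableSet_Ici hin,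
      lintegral_mul_const _ hM3, oneD hε]
  rw [hL]
  -- RHS
  have hRcong : ∫ y : E (m+2), vE (m+3) (by omega) ε (emb (m+3) y) ^
        (2 * (((m+3:ℕ):ℝ) - 1) / (((m+3:ℕ):ℝ) - 2))
      = ∫ y : E (m+2), ε ^ ((m:ℝ)+2) * ((ε ^ 2 + ∑ b, y b ^ 2) ^ (-((m:ℝ)+2))) :=
    integral_congr_ae (ae_of_all _ fun y => boundary_eq hε y)
  rw [hRcong]
  have hevb : ∀ b : Fin (m+2), Measurable fun y : E (m+2) => y b := fun b =>
    (measurable_pi_apply b).comp ((MeasurableEquiv.toLp 2 (Fin (m+2) → ℝ)).symm).measurable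
  have hbaseE : Measurable fun y : E (m+2) => ε ^ 2 + ∑ b, y b ^ 2 :=
    measurable_const.add (Finset.measurable_sum _ fun b _ => (hevb b).pow_const 2)
  have hRmeas : Measurable fun y : E (m+2) =>
      ε ^ ((m:ℝ)+2) * ((ε ^ 2 + ∑ b, y b ^ 2) ^ (-((m:ℝ)+2))) :=
    ((measurable_rpow_const _).comp hbaseE).const_mul _
  rw [integral_eq_lintegral_of_nonneg_ae
    (ae_of_all _ fun y => mul_nonneg (Real.rpow_nonneg hε.le _)
      (Real.rpow_nonneg (by positivity) _))
    hRmeas.aestronglyMeasurable]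
  have hsplit : ∀ y : E (m+2),
      ENNReal.ofReal (ε ^ ((m:ℝ)+2) * ((ε ^ 2 + ∑ b, y b ^ 2) ^ (-((m:ℝ)+2))))
        = ENNReal.ofReal (ε ^ ((m:ℝ)+2)) *
            ENNReal.ofReal ((ε ^ 2 + ∑ b, y b ^ 2) ^ (-((m:ℝ)+2))) :=
    fun y => ENNReal.ofReal_mul (Real.rpow_nonneg hε.le _)
  simp only [hsplit]
  have hM4 : Measurable fun y : E (m+2) =>
      ENNReal.ofReal ((ε ^ 2 + ∑ b, y b ^ 2) ^ (-((m:ℝ)+2))) := by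
    exact ((measurable_rpow_const _).comp hbaseE).ennreal_ofReal
  rw [lintegral_const_mul _ hM4]
  have htr2 : ∫⁻ y : E (m+2), ENNReal.ofReal ((ε ^ 2 + ∑ b, y b ^ 2) ^ (-((m:ℝ)+2)))
      = Kk (m+2) (-((m:ℝ)+2)) ε := by
    have mp3 := (EuclideanSpace.volume_preserving_symm_measurableEquiv_toLp (Fin (m+2))).symm
    rw [MeasurePreserving.lintegral_map_equiv _
      ((MeasurableEquiv.toLp 2 (Fin (m+2) → ℝ)).symm).symm mp3]
    rfl
  rw [htr2, Kk_scale _ hε]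
  have hexp2 : ((m+2:ℕ):ℝ) + 2 * (-((m:ℝ)+2)) = -((m:ℝ)+2) := by push_cast; ring
  rw [hexp2]
  -- final arithmetic
  rw [ENNReal.toReal_mul, ENNReal.toReal_mul, ENNReal.toReal_mul, ENNReal.toReal_mul,
    ENNReal.toReal_ofReal (by positivity), ENNReal.toReal_ofReal (by positivity),
    ENNReal.toReal_ofReal (Real.rpow_nonneg hε.le _),
    ENNReal.toReal_ofReal (Real.rpow_nonneg hε.le _)]
  have hε1 : ε ^ ((m:ℝ)+1) * ε ^ (-((m:ℝ)+1)) = 1 := by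
    rw [← Real.rpow_add hε, show ((m:ℝ)+1) + -((m:ℝ)+1) = 0 by ring, Real.rpow_zero]
  have hε2 : ε ^ ((m:ℝ)+2) * ε ^ (-((m:ℝ)+2)) = 1 := by
    rw [← Real.rpow_add hε, show ((m:ℝ)+2) + -((m:ℝ)+2) = 0 by ring, Real.rpow_zero]
  have hc : ((m+3:ℕ):ℝ) - 2 = (m:ℝ)+1 := by push_cast; ring
  rw [hc]
  have hm1 : ((m:ℝ)+1) ≠ 0 := by positivity
  set T := (Kk (m + 2) (-((m:ℝ) + 2)) 1).toReal with hT
  have key : ((m:ℝ) + 1) ^ 2 * ε ^ ((m:ℝ) + 1) * (ε ^ (-((m:ℝ) + 1)) / ((m:ℝ) + 1) * T)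
      = (((m:ℝ)+1) * (ε ^ ((m:ℝ)+1) * ε ^ (-((m:ℝ)+1)))) * T := by
    field_simp
  rw [key, hε1]
  calc (((m:ℝ)+1) * 1) * T = ((m:ℝ)+1) * ((ε ^ ((m:ℝ)+2) * ε ^ (-((m:ℝ)+2))) * T) := by
        rw [hε2]; ring
    _ = ((m:ℝ)+1) * (ε ^ ((m:ℝ)+2) * (ε ^ (-((m:ℝ)+2)) * T)) := by ring

/-- Dirichlet energy of `v_ε` equals `(n-2)` times the critical boundary integral. -/
theorem v_energy (n : ℕ) (hn : 3 ≤ n) (ε : ℝ) (hε : 0 < ε) :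
    ∫ x in {x : E n | 0 ≤ x (nIdx n (by omega))},
        (∑ i, pder i (vE n (by omega) ε) x ^ 2) =
      ((n : ℝ) - 2) *
        ∫ y : E (n - 1),
          vE n (by omega) ε (emb n y) ^ (2 * ((n : ℝ) - 1) / ((n : ℝ) - 2)) := by
  obtain ⟨m, rfl⟩ : ∃ m, n = m + 3 := ⟨n - 3, by omega⟩
  exact v_energy_aux m ε hε
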